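/- If H is a minor of a signed graph G (obtained by vertex deletions, edge deletions, and contractions of edges that are positive after an equivalent switching), and edges e₁, e₂ of H are untied in H, then the corresponding edges are untied in G. -/

import Mathlib

/-- A finite loopless signed multigraph. -/
structure SGraph : Type 1 where
  V : Type
  E : Type
  [fintV : Fintype V]
  [decV : DecidableEq V]
  [fintE : Fintype E]
  [decE : DecidableEq E]
  ends : E → Sym2 V
  loopless : ∀ e, ¬ (ends e).IsDiag
  sgn : E → ℤˣ

attribute [instance] SGraph.fintV SGraph.decV SGraph.fintE SGraph.decE

namespace SGraph

variable (G : SGraph)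

/-- Degree of a vertex in an edge set. -/
noncomputable def deg (S : Set G.E) (v : G.V) : ℕ := {e ∈ S | v ∈ G.ends e}.ncard

/-- The sign of an edge set: the product of the signs of its edges. -/
noncomputable def signOf (S : Set G.E) : ℤˣ := ∏ᶠ e ∈ S, G.sgn e

/-- An edge set is connected: any two of its edges are linked by a chain of
edges of the set, consecutive ones sharing a vertex. -/
def conn (S : Set G.E) : Prop :=
  ∀ e ∈ S, ∀ f ∈ S,
    Relation.ReflTransGen (fun a b => a ∈ S ∧ b ∈ S ∧ ∃ v, v ∈ G.ends a ∧ v ∈ G.ends b) e f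

/-- An edge set is (the edge set of) a cycle: nonempty, every vertex has degree 0 or 2,
and it is connected. -/
def IsCycle (S : Set G.E) : Prop :=
  S.Nonempty ∧ (∀ v, G.deg S v = 0 ∨ G.deg S v = 2) ∧ G.conn S

/-- The vertices covered by an edge set. -/
def verts (S : Set G.E) : Set G.V := {v | ∃ e ∈ S, v ∈ G.ends e}

/-- Two edges are untied: there are cycles of both signs through both edges. -/
def Untied (e₁ e₂ : G.E) : Prop :=
  (∃ C, G.IsCycle C ∧ e₁ ∈ C ∧ e₂ ∈ C ∧ G.signOf C = 1) ∧
  (∃ C, G.IsCycle C ∧ e₁ ∈ C ∧ e₂ ∈ C ∧ G.signOf C = -1)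

/-- Two edges are tied: all cycles through both have the same sign. -/
def Tied (e₁ e₂ : G.E) : Prop :=
  ∀ C C', G.IsCycle C → G.IsCycle C' → e₁ ∈ C → e₂ ∈ C → e₁ ∈ C' → e₂ ∈ C' →
    G.signOf C = G.signOf C'

/-- A signed graph is balanced if every cycle is positive. -/
def Balanced : Prop := ∀ C, G.IsCycle C → G.signOf C = 1

/-- Reachability between vertices avoiding a forbidden vertex set `S`. -/
def ReachOutside (S : Set G.V) : G.V → G.V → Prop :=
  Relation.ReflTransGen (fun a b => a ∉ S ∧ b ∉ S ∧ ∃ e, G.ends e = s(a, b))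

/-- The graph minus the vertex set `S` is connected. -/
def ConnOutside (S : Set G.V) : Prop :=
  ∀ u v : G.V, u ∉ S → v ∉ S → G.ReachOutside S u v

/-- `k`-connectivity: more than `k` vertices, and removing fewer than `k` vertices
leaves a connected graph. -/
def KConnected (k : ℕ) : Prop :=
  k + 1 ≤ Fintype.card G.V ∧ ∀ S : Set G.V, S.ncard < k → G.ConnOutside S

/-- `P` is the edge set of a path from `a` to `b` (possibly trivial when `a = b`). -/
def IsPath (P : Set G.E) (a b : G.V) : Prop :=
  (a = b ∧ P = ∅) ∨
  (a ≠ b ∧ P.Nonempty ∧ G.deg P a = 1 ∧ G.deg P b = 1 ∧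
    (∀ v, v ≠ a → v ≠ b → G.deg P v = 0 ∨ G.deg P v = 2) ∧ G.conn P)

/-- The vertices of a path from `a` to `b`, including its ends. -/
def pverts (P : Set G.E) (a b : G.V) : Set G.V := G.verts P ∪ {a, b}

/-- An edge set is an edge-cut `δ(X)`. -/
def EdgeCut (S : Set G.E) : Prop :=
  ∃ X : Set G.V, ∀ e, e ∈ S ↔ ∃ a b, G.ends e = s(a, b) ∧ a ∈ X ∧ b ∉ X

/-- A signed graph is simple if no two distinct edges are parallel. -/
def Simple : Prop := ∀ e f : G.E, G.ends e = G.ends f → e = f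

end SGraph

namespace SGraph

/-- `H` is a minor of `G` with edge correspondence `ψ`: there are disjoint nonempty
branch sets `φ a`, each connected using edges that are positive after the switching
`sw`, and each edge `h` of `H` corresponds to an edge `ψ h` of `G` joining the
appropriate branch sets, with the sign of `h` equal to the switched sign of `ψ h`. -/
def IsSignedMinor (H G : SGraph) (ψ : H.E → G.E) : Prop :=
  Function.Injective ψ ∧
  ∃ (φ : H.V → Set G.V) (sw : G.V → ℤˣ),
    (∀ a, (φ a).Nonempty) ∧
    (∀ a b, a ≠ b → Disjoint (φ a) (φ b)) ∧
    (∀ a, ∀ x ∈ φ a, ∀ y ∈ φ a,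
      Relation.ReflTransGen (fun p q => p ∈ φ a ∧ q ∈ φ a ∧
        ∃ e, G.ends e = s(p, q) ∧ sw p * sw q * G.sgn e = 1) x y) ∧
    (∀ h : H.E, ∀ a b : H.V, H.ends h = s(a, b) →
      ∃ u ∈ φ a, ∃ v ∈ φ b, G.ends (ψ h) = s(u, v) ∧
        H.sgn h = sw u * sw v * G.sgn (ψ h))

end SGraph

namespace SGraph
variable {G : SGraph}


lemma units_eq_of_mul (u v w : ℤˣ) (h : u * v * w = 1) : w = u * v := by
  have h2 := inv_eq_of_mul_eq_one_right h
  rw [← h2, Int.units_inv_eq_self]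

lemma deg_empty (v : G.V) : G.deg ∅ v = 0 := by simp [deg]

lemma mem_verts {S : Set G.E} {e : G.E} {v : G.V} (he : e ∈ S) (hv : v ∈ G.ends e) :
    v ∈ G.verts S := ⟨e, he, hv⟩

lemma deg_eq_zero_of_not_mem_verts {S : Set G.E} {v : G.V} (h : v ∉ G.verts S) :
    G.deg S v = 0 := by
  have : {e ∈ S | v ∈ G.ends e} = ∅ := by
    ext e; simp only [Set.mem_setOf_eq, Set.mem_empty_iff_false, iff_false]
    rintro ⟨he, hv⟩; exact h ⟨e, he, hv⟩
  rw [deg, this, Set.ncard_empty]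

lemma exists_mem_of_deg_pos {S : Set G.E} {v : G.V} (h : 0 < G.deg S v) :
    ∃ e ∈ S, v ∈ G.ends e := by
  have : {e ∈ S | v ∈ G.ends e}.Nonempty := by
    rw [Set.nonempty_iff_ne_empty]
    intro he; rw [deg, he, Set.ncard_empty] at h; omega
  obtain ⟨e, he, hv⟩ := this
  exact ⟨e, he, hv⟩

lemma deg_insert {S : Set G.E} {e : G.E} (he : e ∉ S) (v : G.V) :
    G.deg (insert e S) v = (if v ∈ G.ends e then 1 else 0) + G.deg S v := by
  by_cases hv : v ∈ G.ends e
  · have : {f ∈ insert e S | v ∈ G.ends f} = insert e {f ∈ S | v ∈ G.ends f} := by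
      ext f
      simp only [Set.mem_insert_iff, Set.mem_setOf_eq]
      constructor
      · rintro ⟨hf | hf, h2⟩
        · exact Or.inl hf
        · exact Or.inr ⟨hf, h2⟩
      · rintro (rfl | ⟨hf, h2⟩)
        · exact ⟨Or.inl rfl, hv⟩
        · exact ⟨Or.inr hf, h2⟩
    rw [deg, this, Set.ncard_insert_of_notMem (fun hf => he hf.1) (Set.toFinite _), if_pos hv,
      deg]
    omega
  · have : {f ∈ insert e S | v ∈ G.ends f} = {f ∈ S | v ∈ G.ends f} := by
      ext f; simp only [Set.mem_insert_iff, Set.mem_setOf_eq]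
      constructor
      · rintro ⟨hf | hf, h2⟩
        · exact absurd (hf ▸ h2) hv
        · exact ⟨hf, h2⟩
      · tauto
    rw [deg, this, if_neg hv, deg]; omega

lemma deg_union {S T : Set G.E} (h : Disjoint S T) (v : G.V) :
    G.deg (S ∪ T) v = G.deg S v + G.deg T v := by
  have hset : {f ∈ S ∪ T | v ∈ G.ends f} = {f ∈ S | v ∈ G.ends f} ∪ {f ∈ T | v ∈ G.ends f} := by
    ext f; simp only [Set.mem_union, Set.mem_setOf_eq]; tauto
  rw [deg, hset, Set.ncard_union_eq (h.mono (Set.sep_subset _ _) (Set.sep_subset _ _))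
    (Set.toFinite _) (Set.toFinite _)]
  rfl

lemma signOf_empty : G.signOf (∅ : Set G.E) = 1 := finprod_mem_empty

lemma signOf_insert {S : Set G.E} {e : G.E} (he : e ∉ S) :
    G.signOf (insert e S) = G.sgn e * G.signOf S :=
  finprod_mem_insert _ he (Set.toFinite S)

lemma signOf_union {S T : Set G.E} (h : Disjoint S T) :
    G.signOf (S ∪ T) = G.signOf S * G.signOf T :=
  finprod_mem_union h (Set.toFinite S) (Set.toFinite T)

lemma rtg_symm {S : Set G.E} :
    Symmetric (Relation.ReflTransGen
      (fun a b => a ∈ S ∧ b ∈ S ∧ ∃ v, v ∈ G.ends a ∧ v ∈ G.ends b)) :=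
  by
    haveI : Std.Symm (fun a b => a ∈ S ∧ b ∈ S ∧ ∃ v, v ∈ G.ends a ∧ v ∈ G.ends b) :=
      ⟨fun _ _ ⟨h1, h2, v, hv1, hv2⟩ => ⟨h2, h1, v, hv2, hv1⟩⟩
    exact fun x y h => Std.Symm.symm x y h



lemma chain_nodupify {α : Type*} {r : α → α → Prop} :
    ∀ (n : ℕ) (l : List α) (a : α), l.length = n → List.Chain r a l →
    ∃ l', List.Chain r a l' ∧ (a :: l').Nodup ∧
      (a :: l').getLast (List.cons_ne_nil _ _) = (a :: l).getLast (List.cons_ne_nil _ _) ∧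
      ∀ x ∈ l', x ∈ l := by
  intro n
  induction n using Nat.strong_induction_on with
  | _ n ih =>
  intro l a hlen h
  by_cases ha : a ∈ l
  · obtain ⟨s, t, rfl⟩ := List.append_of_mem ha
    have heq : a :: (s ++ a :: t) = (a :: s) ++ (a :: t) := by simp
    have hsuf : (a :: t) <:+ (a :: (s ++ a :: t)) := by
      rw [heq]; exact List.suffix_append _ _
    have hchain' : List.Chain' r (a :: (s ++ a :: t)) := h
    have hchain : List.Chain r a t := hchain'.suffix hsuf
    have hlt : t.length < n := by
      subst hlen; simp only [List.length_append, List.length_cons]; omega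
    obtain ⟨l', h1, h2, h3, h4⟩ := ih t.length hlt t a rfl hchain
    refine ⟨l', h1, h2, ?_, fun x hx => ?_⟩
    · rw [h3]
      exact (List.getLast_append_of_ne_nil (l := a :: s) (l' := a :: t) _ (List.cons_ne_nil _ _)).symm
    · have := h4 x hx
      simp only [List.mem_append, List.mem_cons]
      tauto
  · cases l with
    | nil => exact ⟨[], List.Chain.nil, List.nodup_singleton a, rfl, by simp⟩
    | cons b t =>
      replace h := List.chain_cons.mp h
      have hlt : t.length < n := by subst hlen; simp
      obtain ⟨l', h1, h2, h3, h4⟩ := ih t.length hlt t b rfl h.2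
      refine ⟨b :: l', List.chain_cons.mpr ⟨h.1, h1⟩, ?_, ?_, ?_⟩
      · rw [List.nodup_cons]
        refine ⟨fun hmem => ?_, h2⟩
        rcases List.mem_cons.mp hmem with rfl | hmem'
        · exact ha (List.mem_cons_self)
        · exact ha (List.mem_cons.mpr (Or.inr (h4 a hmem')))
      · rw [List.getLast_cons (List.cons_ne_nil _ _), List.getLast_cons (List.cons_ne_nil _ _)]
        exact h3
      · intro x hx
        rcases List.mem_cons.mp hx with rfl | hx'
        · exact List.mem_cons_self
        · exact List.mem_cons.mpr (Or.inr (h4 x hx'))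


lemma verts_empty : G.verts (∅ : Set G.E) = ∅ := by
  ext v; simp [verts]

lemma path_of_nodup_chain (sw : G.V → ℤˣ) (A : Set G.V) :
    ∀ (l : List G.V) (a : G.V),
      List.Chain (fun p q => p ∈ A ∧ q ∈ A ∧
        ∃ e, G.ends e = s(p, q) ∧ sw p * sw q * G.sgn e = 1) a l →
      (a :: l).Nodup →
      ∃ P : Set G.E, G.IsPath P a ((a :: l).getLast (List.cons_ne_nil _ _)) ∧
        (∀ v ∈ G.verts P, v ∈ A) ∧ (∀ v ∈ G.verts P, v ∈ (a :: l)) ∧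
        G.signOf P = sw a * sw ((a :: l).getLast (List.cons_ne_nil _ _)) := by
  intro l
  induction l with
  | nil =>
    intro a _ _
    refine ⟨∅, Or.inl ⟨rfl, rfl⟩, ?_, ?_, ?_⟩
    · intro v hv; rw [verts_empty] at hv; exact absurd hv (Set.notMem_empty v)
    · intro v hv; rw [verts_empty] at hv; exact absurd hv (Set.notMem_empty v)
    · have h1 : ([a].getLast (List.cons_ne_nil _ _)) = a := rfl
      rw [signOf_empty, h1, Int.units_mul_self]
  | cons b t ih =>
    intro a hchain hnodup
    replace hchain := List.chain_cons.mp hchain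
    obtain ⟨⟨haA, hbA, e, hends, hsgn⟩, hchain'⟩ := hchain
    obtain ⟨P', hpath', hA', hlist', hsign'⟩ := ih b hchain' (List.Nodup.of_cons hnodup)
    set z := ((b :: t).getLast (List.cons_ne_nil _ _)) with hz
    have hzlast : ((a :: b :: t).getLast (List.cons_ne_nil _ _)) = z :=
      List.getLast_cons (List.cons_ne_nil _ _)
    rw [hzlast]
    have hanotl : a ∉ b :: t := (List.nodup_cons.mp hnodup).1
    have hae : a ∈ G.ends e := by rw [hends]; exact Sym2.mem_mk_left _ _
    have hbe : b ∈ G.ends e := by rw [hends]; exact Sym2.mem_mk_right _ _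
    have hav : a ∉ G.verts P' := fun hv => hanotl (hlist' a hv)
    have heP' : e ∉ P' := fun hmem => hav (mem_verts hmem hae)
    have hzmem : z ∈ b :: t := List.getLast_mem _
    have haz : a ≠ z := fun h => hanotl (h ▸ hzmem)
    clear_value z
    have hdega : G.deg (insert e P') a = 1 := by
      rw [deg_insert heP', if_pos hae, deg_eq_zero_of_not_mem_verts hav]
    have hsgne : G.sgn e = sw a * sw b := units_eq_of_mul _ _ _ hsgn
    have hvertsP : ∀ v ∈ G.verts (insert e P'), v = a ∨ v = b ∨ v ∈ G.verts P' := by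
      rintro v ⟨f, hf, hvf⟩
      rcases Set.mem_insert_iff.mp hf with rfl | hf'
      · rw [hends, Sym2.mem_iff] at hvf; tauto
      · exact Or.inr (Or.inr ⟨f, hf', hvf⟩)
    have hsubA : ∀ v ∈ G.verts (insert e P'), v ∈ A := by
      intro v hv
      rcases hvertsP v hv with rfl | rfl | h'
      · exact haA
      · exact hbA
      · exact hA' v h'
    have hsubl : ∀ v ∈ G.verts (insert e P'), v ∈ a :: b :: t := by
      intro v hv
      rcases hvertsP v hv with rfl | rfl | h'
      · exact List.mem_cons_self
      · exact List.mem_cons.mpr (Or.inr (List.mem_cons_self))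
      · exact List.mem_cons.mpr (Or.inr (hlist' v h'))
    rcases hpath' with ⟨hbz, hP'e⟩ | ⟨hbz, hne', hdb, hdz, hint, hconn'⟩
    · -- b = z, P' = ∅, P = {e}
      subst hP'e
      refine ⟨insert e ∅, Or.inr ⟨haz, ⟨e, Set.mem_insert _ _⟩, hdega, ?_, ?_, ?_⟩, hsubA, hsubl, ?_⟩
      · rw [← hbz, deg_insert heP', if_pos hbe, deg_empty]
      · intro v hva hvz
        left
        rw [deg_insert heP', deg_empty, if_neg, Nat.add_zero]
        rw [hends, Sym2.mem_iff]
        rintro (rfl | rfl)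
        · exact hva rfl
        · exact hvz hbz
      · intro f hf g hg
        rcases Set.mem_insert_iff.mp hf with rfl | hf'
        · rcases Set.mem_insert_iff.mp hg with rfl | hg'
          · exact Relation.ReflTransGen.refl
          · exact absurd hg' (Set.notMem_empty g)
        · exact absurd hf' (Set.notMem_empty f)
      · rw [signOf_insert heP', signOf_empty, mul_one, hsgne, hbz]
    · -- b ≠ z, P' nonempty
      have hze : z ∉ G.ends e := by
        rw [hends, Sym2.mem_iff]
        rintro (rfl | rfl)
        · exact haz rfl
        · exact hbz rfl
      obtain ⟨pb, hpb, hbpb⟩ := exists_mem_of_deg_pos (by omega : 0 < G.deg P' b)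
      have hmono : ∀ f g : G.E, (f ∈ P' ∧ g ∈ P' ∧ ∃ v, v ∈ G.ends f ∧ v ∈ G.ends g) →
          (f ∈ insert e P' ∧ g ∈ insert e P' ∧ ∃ v, v ∈ G.ends f ∧ v ∈ G.ends g) :=
        fun f g ⟨h1, h2, h3⟩ => ⟨Set.mem_insert_of_mem _ h1, Set.mem_insert_of_mem _ h2, h3⟩
      have hstep : ∀ f ∈ P', Relation.ReflTransGen (fun x y => x ∈ insert e P' ∧
          y ∈ insert e P' ∧ ∃ v, v ∈ G.ends x ∧ v ∈ G.ends y) e f := by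
        intro f hf
        refine Relation.ReflTransGen.head ⟨Set.mem_insert _ _,
          Set.mem_insert_of_mem _ hpb, b, hbe, hbpb⟩ ?_
        exact Relation.ReflTransGen.mono hmono _ _ (hconn' pb hpb f hf)
      refine ⟨insert e P', Or.inr ⟨haz, ⟨e, Set.mem_insert _ _⟩, hdega, ?_, ?_, ?_⟩,
        hsubA, hsubl, ?_⟩
      · rw [deg_insert heP', if_neg hze, Nat.zero_add, hdz]
      · intro v hva hvz
        by_cases hvb : v = b
        · subst hvb
          right
          rw [deg_insert heP', if_pos hbe, hdb]
        · have hve : v ∉ G.ends e := by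
            rw [hends, Sym2.mem_iff]
            rintro (rfl | rfl)
            · exact hva rfl
            · exact hvb rfl
          rw [deg_insert heP', if_neg hve, Nat.zero_add]
          exact hint v hvb hvz
      · intro f hf g hg
        rcases Set.mem_insert_iff.mp hf with rfl | hf'
        · rcases Set.mem_insert_iff.mp hg with rfl | hg'
          · exact Relation.ReflTransGen.refl
          · exact hstep g hg'
        · rcases Set.mem_insert_iff.mp hg with rfl | hg'
          · exact rtg_symm (hstep f hf')
          · exact Relation.ReflTransGen.mono hmono _ _ (hconn' f hf' g hg')
      · rw [signOf_insert heP', hsgne, hsign']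
        rw [mul_assoc, ← mul_assoc (sw b) (sw b), Int.units_mul_self, one_mul]

lemma exists_goodPath (sw : G.V → ℤˣ) (A : Set G.V) (x y : G.V)
    (h : Relation.ReflTransGen (fun p q => p ∈ A ∧ q ∈ A ∧
      ∃ e, G.ends e = s(p, q) ∧ sw p * sw q * G.sgn e = 1) x y) :
    ∃ P : Set G.E, G.IsPath P x y ∧ (∀ v ∈ G.verts P, v ∈ A) ∧
      G.signOf P = sw x * sw y := by
  obtain ⟨l, hchain, hlast⟩ := List.exists_isChain_cons_of_relationReflTransGen h
  obtain ⟨l', h1, h2, h3, _⟩ := chain_nodupify l.length l x rfl hchain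
  obtain ⟨P, hp, hA, _, hs⟩ := path_of_nodup_chain sw A l' x h1 h2
  rw [h3, hlast] at hp hs
  exact ⟨P, hp, hA, hs⟩

end SGraph

namespace SGraph

lemma exists_mem_ends (G : SGraph) (e : G.E) : ∃ v, v ∈ G.ends e :=
  ⟨(G.ends e).out.1, Sym2.out_fst_mem _⟩

lemma exists_rep_ends (G : SGraph) (e : G.E) : ∃ a b, G.ends e = s(a, b) :=
  ⟨(G.ends e).out.1, (G.ends e).out.2, by rw [Sym2.mk, (G.ends e).out_eq]⟩

lemma units_swap (u v w z : ℤˣ) (h : z = u * v * w) : w = u * v * z := by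
  subst h
  rw [← mul_assoc, Int.units_mul_self, one_mul]

lemma cycle_lift (H G : SGraph) (ψ : H.E → G.E) (hm : SGraph.IsSignedMinor H G ψ)
    (C : Set H.E) (hC : H.IsCycle C) :
    ∃ S : Set G.E, G.IsCycle S ∧ (∀ h, h ∈ C → ψ h ∈ S) ∧ G.signOf S = H.signOf C := by
  classical
  obtain ⟨hinj, φ, sw, hφne, hφdisj, hφconn, hedge⟩ := hm
  obtain ⟨hCne, hCdeg, hCconn⟩ := hC
  obtain ⟨h₀, hh₀⟩ := hCne
  -- attachment points
  have hatt0 : ∀ h : H.E, ∃ (p : H.V × H.V) (q : G.V × G.V),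
      H.ends h = s(p.1, p.2) ∧ q.1 ∈ φ p.1 ∧ q.2 ∈ φ p.2 ∧
      G.ends (ψ h) = s(q.1, q.2) ∧ H.sgn h = sw q.1 * sw q.2 * G.sgn (ψ h) := by
    intro h
    obtain ⟨a, b, hab⟩ := exists_rep_ends H h
    obtain ⟨u, hu, v, hv, he, hs⟩ := hedge h a b hab
    exact ⟨(a, b), (u, v), hab, hu, hv, he, hs⟩
  choose pf qf hends1 hmem1 hmem2 hends2 hsgn1 using hatt0
  set att : H.E → H.V → G.V := fun h a => if a = (pf h).1 then (qf h).1 else (qf h).2 with hattdef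
  have hploop : ∀ h, (pf h).1 ≠ (pf h).2 := by
    intro h he
    exact H.loopless h (by rw [hends1 h]; simp [he])
  have hatt1 : ∀ h, att h (pf h).1 = (qf h).1 := fun h => if_pos rfl
  have hatt2 : ∀ h, att h (pf h).2 = (qf h).2 := fun h => if_neg (hploop h).symm
  have hatt_ends : ∀ h a b, H.ends h = s(a, b) →
      G.ends (ψ h) = s(att h a, att h b) ∧
      H.sgn h = sw (att h a) * sw (att h b) * G.sgn (ψ h) ∧
      att h a ∈ φ a ∧ att h b ∈ φ b := by
    intro h a b hab
    have heq : s((pf h).1, (pf h).2) = s(a, b) := (hends1 h).symm.trans hab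
    rcases Sym2.eq_iff.mp heq with ⟨rfl, rfl⟩ | ⟨rfl, rfl⟩
    · rw [hatt1, hatt2]
      exact ⟨hends2 h, hsgn1 h, hmem1 h, hmem2 h⟩
    · rw [hatt1, hatt2]
      refine ⟨(hends2 h).trans Sym2.eq_swap, ?_, hmem2 h, hmem1 h⟩
      rw [hsgn1 h, mul_comm (sw (qf h).1) (sw (qf h).2)]
  have hatt_mem : ∀ h a, a ∈ H.ends h → att h a ∈ φ a := by
    intro h a ha
    obtain ⟨b, hb⟩ := Sym2.mem_iff_exists.mp ha
    exact (hatt_ends h a b hb).2.2.1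
  have hatt_in_ends : ∀ h a, a ∈ H.ends h → att h a ∈ G.ends (ψ h) := by
    intro h a ha
    obtain ⟨b, hb⟩ := Sym2.mem_iff_exists.mp ha
    rw [(hatt_ends h a b hb).1]
    exact Sym2.mem_mk_left _ _
  have hψE : ∀ h : H.E, ∀ v, v ∈ G.ends (ψ h) → ∃ a, a ∈ H.ends h ∧ att h a = v ∧ v ∈ φ a := by
    intro h v hv
    rw [(hatt_ends h (pf h).1 (pf h).2 (hends1 h)).1, Sym2.mem_iff] at hv
    rcases hv with rfl | rfl
    · exact ⟨(pf h).1, by rw [hends1 h]; exact Sym2.mem_mk_left _ _, rfl,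
        hatt_mem h _ (by rw [hends1 h]; exact Sym2.mem_mk_left _ _)⟩
    · exact ⟨(pf h).2, by rw [hends1 h]; exact Sym2.mem_mk_right _ _, rfl,
        hatt_mem h _ (by rw [hends1 h]; exact Sym2.mem_mk_right _ _)⟩
  -- the two edges at each degree-2 vertex and the connecting path
  have hWdata : ∀ a : H.V, ∃ (hh : H.E × H.E) (P : Set G.E),
      (H.deg C a = 2 →
        hh.1 ∈ C ∧ hh.2 ∈ C ∧ hh.1 ≠ hh.2 ∧ a ∈ H.ends hh.1 ∧ a ∈ H.ends hh.2 ∧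
        (∀ g ∈ C, a ∈ H.ends g → g = hh.1 ∨ g = hh.2) ∧
        G.IsPath P (att hh.1 a) (att hh.2 a) ∧ (∀ v ∈ G.verts P, v ∈ φ a) ∧
        G.signOf P = sw (att hh.1 a) * sw (att hh.2 a)) ∧
      (H.deg C a ≠ 2 → P = ∅) := by
    intro a
    by_cases hd : H.deg C a = 2
    · obtain ⟨f1, f2, hf12, hset⟩ := Set.ncard_eq_two.mp hd
      have hf1 : f1 ∈ C ∧ a ∈ H.ends f1 := by
        have : f1 ∈ {h ∈ C | a ∈ H.ends h} := by rw [hset]; exact Set.mem_insert _ _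
        exact this
      have hf2 : f2 ∈ C ∧ a ∈ H.ends f2 := by
        have : f2 ∈ {h ∈ C | a ∈ H.ends h} := by
          rw [hset]; exact Set.mem_insert_of_mem _ rfl
        exact this
      obtain ⟨P, hP, hPA, hPs⟩ := exists_goodPath sw (φ a) (att f1 a) (att f2 a)
        (hφconn a _ (hatt_mem f1 a hf1.2) _ (hatt_mem f2 a hf2.2))
      refine ⟨(f1, f2), P, fun _ => ⟨hf1.1, hf2.1, hf12, hf1.2, hf2.2, ?_, hP, hPA, hPs⟩,
        fun hnd => absurd hd hnd⟩
      intro g hg hga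
      have : g ∈ {h ∈ C | a ∈ H.ends h} := ⟨hg, hga⟩
      rw [hset] at this
      exact this
    · exact ⟨(h₀, h₀), ∅, fun h2 => absurd h2 hd, fun _ => rfl⟩
  choose ff PP hQ hP0 using hWdata
  -- the lifted edge set
  set S : Set G.E := ψ '' C ∪ ⋃ a, PP a with hSdef
  have hPverts : ∀ a, ∀ v ∈ G.verts (PP a), v ∈ φ a := by
    intro a v hv
    by_cases hd : H.deg C a = 2
    · exact (hQ a hd).2.2.2.2.2.2.2.1 v hv
    · rw [hP0 a hd, verts_empty] at hv; exact absurd hv (Set.notMem_empty v)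
  have hφuniq : ∀ a b : H.V, ∀ v : G.V, v ∈ φ a → v ∈ φ b → a = b := by
    intro a b v hva hvb
    by_contra hab
    exact Set.disjoint_left.mp (hφdisj a b hab) hva hvb
  have hPenotψ : ∀ a : H.V, ∀ h : H.E, ψ h ∉ PP a := by
    intro a h hmem
    have h1 := hPverts a _ (mem_verts hmem (hatt_in_ends h (pf h).1
      (by rw [hends1 h]; exact Sym2.mem_mk_left _ _)))
    have h2 := hPverts a _ (mem_verts hmem (hatt_in_ends h (pf h).2
      (by rw [hends1 h]; exact Sym2.mem_mk_right _ _)))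
    exact hploop h ((hφuniq _ _ _ (hatt_mem h _ (by rw [hends1 h]; exact Sym2.mem_mk_left _ _)) h1).trans
      (hφuniq _ _ _ (hatt_mem h _ (by rw [hends1 h]; exact Sym2.mem_mk_right _ _)) h2).symm)
  have hdisjPP : Pairwise (Function.onFun Disjoint PP) := by
    intro a b hab
    have : Disjoint (PP a) (PP b) := by
      rw [Set.disjoint_left]
      intro e hea heb
      obtain ⟨v, hv⟩ := exists_mem_ends G e
      exact hab (hφuniq a b v (hPverts a v (mem_verts hea hv)) (hPverts b v (mem_verts heb hv)))
    exact this
  have hdisjS : Disjoint (ψ '' C) (⋃ a, PP a) := by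
    rw [Set.disjoint_left]
    rintro e ⟨h, _, rfl⟩ hU
    obtain ⟨a, ha⟩ := Set.mem_iUnion.mp hU
    exact hPenotψ a h ha
  have hψS : ∀ h, h ∈ C → ψ h ∈ S := fun h hh => Set.mem_union_left _ ⟨h, hh, rfl⟩
  have hPS : ∀ a, PP a ⊆ S := fun a => (Set.subset_iUnion PP a).trans Set.subset_union_right
  refine ⟨S, ⟨⟨ψ h₀, hψS h₀ hh₀⟩, ?_, ?_⟩, hψS, ?_⟩
  · -- degrees
    intro v
    rw [hSdef, deg_union hdisjS]
    by_cases hva : ∃ a, v ∈ φ a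
    · obtain ⟨a, hva⟩ := hva
      have hdegU : G.deg (⋃ b, PP b) v = G.deg (PP a) v := by
        have hset : {e ∈ ⋃ b, PP b | v ∈ G.ends e} = {e ∈ PP a | v ∈ G.ends e} := by
          ext e
          simp only [Set.mem_setOf_eq, Set.mem_iUnion]
          constructor
          · rintro ⟨⟨b, heb⟩, hve⟩
            have hba : b = a := hφuniq b a v (hPverts b v (mem_verts heb hve)) hva
            exact ⟨hba ▸ heb, hve⟩
          · rintro ⟨hea, hve⟩
            exact ⟨⟨a, hea⟩, hve⟩
        rw [deg, hset, deg]
      have hdegψ : G.deg (ψ '' C) v = {h ∈ C | a ∈ H.ends h ∧ att h a = v}.ncard := by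
        have hset : {e ∈ ψ '' C | v ∈ G.ends e}
            = ψ '' {h ∈ C | a ∈ H.ends h ∧ att h a = v} := by
          ext e
          simp only [Set.mem_setOf_eq, Set.mem_image]
          constructor
          · rintro ⟨⟨h, hh, rfl⟩, hve⟩
            obtain ⟨a', ha', hatt', hva'⟩ := hψE h v hve
            have haa : a' = a := hφuniq a' a v hva' hva
            subst haa
            exact ⟨h, ⟨hh, ha', hatt'⟩, rfl⟩
          · rintro ⟨h, ⟨hh, hha, hatt'⟩, rfl⟩
            exact ⟨⟨h, hh, rfl⟩, hatt' ▸ hatt_in_ends h a hha⟩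
        rw [deg, hset, Set.ncard_image_of_injective _ hinj]
      rw [hdegU, hdegψ]
      by_cases hd : H.deg C a = 2
      · obtain ⟨hf1C, hf2C, hf12, haf1, haf2, huniq, hpath, hPA, hPs⟩ := hQ a hd
        rcases hpath with ⟨hxy, hPe⟩ | ⟨hxy, hPne, hdx, hdy, hint, _⟩
        · -- the two attachment points coincide, empty path
          have hB : G.deg (PP a) v = 0 := by rw [hPe]; exact deg_empty v
          by_cases hvx : v = att (ff a).1 a
          · have hA : {h ∈ C | a ∈ H.ends h ∧ att h a = v}.ncard = 2 := by
              have hset : {h ∈ C | a ∈ H.ends h ∧ att h a = v} = {(ff a).1, (ff a).2} := by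
                ext g
                simp only [Set.mem_setOf_eq, Set.mem_insert_iff, Set.mem_singleton_iff]
                constructor
                · rintro ⟨hg, hga, -⟩; exact huniq g hg hga
                · rintro (rfl | rfl)
                  · exact ⟨hf1C, haf1, hvx.symm⟩
                  · exact ⟨hf2C, haf2, by rw [← hxy]; exact hvx.symm⟩
              rw [hset, Set.ncard_pair hf12]
            omega
          · have hA : {h ∈ C | a ∈ H.ends h ∧ att h a = v}.ncard = 0 := by
              have hset : {h ∈ C | a ∈ H.ends h ∧ att h a = v} = ∅ := by
                ext g
                simp only [Set.mem_setOf_eq, Set.mem_empty_iff_false, iff_false]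
                rintro ⟨hg, hga, hgv⟩
                rcases huniq g hg hga with rfl | rfl
                · exact hvx hgv.symm
                · exact hvx (by rw [← hgv, hxy])
              rw [hset, Set.ncard_empty]
            omega
        · -- two distinct attachment points
          by_cases hvx : v = att (ff a).1 a
          · have hA : {h ∈ C | a ∈ H.ends h ∧ att h a = v}.ncard = 1 := by
              have hset : {h ∈ C | a ∈ H.ends h ∧ att h a = v} = {(ff a).1} := by
                ext g
                simp only [Set.mem_setOf_eq, Set.mem_singleton_iff]
                constructor
                · rintro ⟨hg, hga, hgv⟩
                  rcases huniq g hg hga with rfl | rfl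
                  · rfl
                  · exact (hxy (hvx.symm.trans hgv.symm)).elim
                · rintro rfl
                  exact ⟨hf1C, haf1, hvx.symm⟩
              rw [hset, Set.ncard_singleton]
            have hB : G.deg (PP a) v = 1 := hvx ▸ hdx
            omega
          · by_cases hvy : v = att (ff a).2 a
            · have hA : {h ∈ C | a ∈ H.ends h ∧ att h a = v}.ncard = 1 := by
                have hset : {h ∈ C | a ∈ H.ends h ∧ att h a = v} = {(ff a).2} := by
                  ext g
                  simp only [Set.mem_setOf_eq, Set.mem_singleton_iff]
                  constructor
                  · rintro ⟨hg, hga, hgv⟩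
                    rcases huniq g hg hga with rfl | rfl
                    · exact (hvx hgv.symm).elim
                    · rfl
                  · rintro rfl
                    exact ⟨hf2C, haf2, hvy.symm⟩
                rw [hset, Set.ncard_singleton]
              have hB : G.deg (PP a) v = 1 := hvy ▸ hdy
              omega
            · have hA : {h ∈ C | a ∈ H.ends h ∧ att h a = v}.ncard = 0 := by
                have hset : {h ∈ C | a ∈ H.ends h ∧ att h a = v} = ∅ := by
                  ext g
                  simp only [Set.mem_setOf_eq, Set.mem_empty_iff_false, iff_false]
                  rintro ⟨hg, hga, hgv⟩
                  rcases huniq g hg hga with rfl | rfl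
                  · exact hvx hgv.symm
                  · exact hvy hgv.symm
                rw [hset, Set.ncard_empty]
              rcases hint v hvx hvy with hB | hB <;> omega
      · have hd0 : H.deg C a = 0 := (hCdeg a).resolve_right hd
        have hempty : {h ∈ C | a ∈ H.ends h} = ∅ := by
          have := (Set.ncard_eq_zero (Set.toFinite {h ∈ C | a ∈ H.ends h})).mp hd0
          exact this
        have hA : {h ∈ C | a ∈ H.ends h ∧ att h a = v}.ncard = 0 := by
          have hset : {h ∈ C | a ∈ H.ends h ∧ att h a = v} = ∅ := by
            ext g
            simp only [Set.mem_setOf_eq, Set.mem_empty_iff_false, iff_false]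
            rintro ⟨hg, hga, -⟩
            have : g ∈ {h ∈ C | a ∈ H.ends h} := ⟨hg, hga⟩
            rw [hempty] at this
            exact this
          rw [hset, Set.ncard_empty]
        have hB : G.deg (PP a) v = 0 := by rw [hP0 a hd]; exact deg_empty v
        omega
    · push_neg at hva
      have hA : G.deg (ψ '' C) v = 0 := by
        apply deg_eq_zero_of_not_mem_verts
        rintro ⟨e, ⟨h, hh, rfl⟩, hve⟩
        obtain ⟨a', -, -, hva'⟩ := hψE h v hve
        exact hva a' hva'
      have hB : G.deg (⋃ b, PP b) v = 0 := by
        apply deg_eq_zero_of_not_mem_verts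
        rintro ⟨e, he, hve⟩
        obtain ⟨b, heb⟩ := Set.mem_iUnion.mp he
        exact hva b (hPverts b v (mem_verts heb hve))
      omega
  · -- connectivity
    have hd2 : ∀ a : H.V, ∀ g, g ∈ C → a ∈ H.ends g → H.deg C a = 2 := by
      intro a g hg hga
      rcases hCdeg a with h0 | h2
      · exfalso
        have hempty := (Set.ncard_eq_zero (Set.toFinite {h ∈ C | a ∈ H.ends h})).mp h0
        have hmm : g ∈ {h ∈ C | a ∈ H.ends h} := ⟨hg, hga⟩
        rw [hempty] at hmm
        exact hmm
      · exact h2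
    have hK1 : ∀ a : H.V, ∀ g g', g ∈ C → g' ∈ C → a ∈ H.ends g → a ∈ H.ends g' →
        Relation.ReflTransGen (fun p q => p ∈ S ∧ q ∈ S ∧ ∃ v, v ∈ G.ends p ∧ v ∈ G.ends q)
          (ψ g) (ψ g') := by
      intro a g g' hg hg' hga hga'
      have hd := hd2 a g hg hga
      obtain ⟨hf1C, hf2C, hf12, haf1, haf2, huniq, hpath, hPA, hPs⟩ := hQ a hd
      have hcore : Relation.ReflTransGen
          (fun p q => p ∈ S ∧ q ∈ S ∧ ∃ v, v ∈ G.ends p ∧ v ∈ G.ends q)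
          (ψ (ff a).1) (ψ (ff a).2) := by
        have hx := hatt_in_ends (ff a).1 a haf1
        have hy := hatt_in_ends (ff a).2 a haf2
        rcases hpath with ⟨hxy, hPe⟩ | ⟨hxy, hPne, hdx, hdy, hint, hconnP⟩
        · exact Relation.ReflTransGen.single
            ⟨hψS _ hf1C, hψS _ hf2C, att (ff a).1 a, hx, hxy ▸ hy⟩
        · obtain ⟨p1, hp1, hxp1⟩ := exists_mem_of_deg_pos (by rw [hdx]; exact Nat.one_pos)
          obtain ⟨p2, hp2, hyp2⟩ := exists_mem_of_deg_pos (by rw [hdy]; exact Nat.one_pos)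
          refine Relation.ReflTransGen.head ⟨hψS _ hf1C, hPS a hp1, _, hx, hxp1⟩ ?_
          refine Relation.ReflTransGen.tail ?_ ⟨hPS a hp2, hψS _ hf2C, _, hyp2, hy⟩
          exact Relation.ReflTransGen.mono (fun p q ⟨h1, h2, h3⟩ => ⟨hPS a h1, hPS a h2, h3⟩) _ _ (hconnP p1 hp1 p2 hp2)
      rcases huniq g hg hga with rfl | rfl <;> rcases huniq g' hg' hga' with rfl | rfl
      · exact Relation.ReflTransGen.refl
      · exact hcore
      · exact rtg_symm hcore
      · exact Relation.ReflTransGen.refl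
    have hK2 : ∀ g g', g ∈ C → g' ∈ C →
        Relation.ReflTransGen (fun p q => p ∈ S ∧ q ∈ S ∧ ∃ v, v ∈ G.ends p ∧ v ∈ G.ends q)
          (ψ g) (ψ g') := by
      intro g g' hg hg'
      have hrt := hCconn g hg g' hg'
      clear hg'
      induction hrt with
      | refl => exact Relation.ReflTransGen.refl
      | tail hprev hstep ih =>
        obtain ⟨hc, hd', v0, hv1, hv2⟩ := hstep
        exact ih.trans (hK1 v0 _ _ hc hd' hv1 hv2)
    have hK3 : ∀ a : H.V, ∀ e ∈ PP a,
        Relation.ReflTransGen (fun p q => p ∈ S ∧ q ∈ S ∧ ∃ v, v ∈ G.ends p ∧ v ∈ G.ends q)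
          e (ψ (ff a).1) ∧ (ff a).1 ∈ C := by
      intro a e he
      by_cases hd : H.deg C a = 2
      · obtain ⟨hf1C, hf2C, hf12, haf1, haf2, huniq, hpath, hPA, hPs⟩ := hQ a hd
        refine ⟨?_, hf1C⟩
        rcases hpath with ⟨hxy, hPe⟩ | ⟨hxy, hPne, hdx, hdy, hint, hconnP⟩
        · rw [hPe] at he; exact absurd he (Set.notMem_empty e)
        · obtain ⟨p1, hp1, hxp1⟩ := exists_mem_of_deg_pos (by rw [hdx]; exact Nat.one_pos)
          refine Relation.ReflTransGen.tail ?_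
            ⟨hPS a hp1, hψS _ hf1C, _, hxp1, hatt_in_ends (ff a).1 a haf1⟩
          exact Relation.ReflTransGen.mono (fun p q ⟨h1, h2, h3⟩ => ⟨hPS a h1, hPS a h2, h3⟩) _ _ (hconnP e he p1 hp1)
      · rw [hP0 a hd] at he; exact absurd he (Set.notMem_empty e)
    intro e he f hf
    have haux : ∀ e', e' ∈ S → ∃ g, g ∈ C ∧
        Relation.ReflTransGen (fun p q => p ∈ S ∧ q ∈ S ∧ ∃ v, v ∈ G.ends p ∧ v ∈ G.ends q)
          e' (ψ g) := by
      intro e' he'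
      rw [hSdef] at he'
      rcases (Set.mem_union _ _ _).mp he' with him | hU
      · obtain ⟨h, hh, rfl⟩ := him
        exact ⟨h, hh, Relation.ReflTransGen.refl⟩
      · obtain ⟨a, ha⟩ := Set.mem_iUnion.mp hU
        obtain ⟨hr, hc⟩ := hK3 a e' ha
        exact ⟨(ff a).1, hc, hr⟩
    obtain ⟨g1, hg1, hr1⟩ := haux e he
    obtain ⟨g2, hg2, hr2⟩ := haux f hf
    exact (hr1.trans (hK2 g1 g2 hg1 hg2)).trans (rtg_symm hr2)
  · -- sign
    have hsplit : G.signOf S = G.signOf (ψ '' C) * G.signOf (⋃ a, PP a) := by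
      rw [hSdef]; exact signOf_union hdisjS
    have hU : G.signOf (⋃ a, PP a) = ∏ a : H.V, G.signOf (PP a) := by
      rw [signOf, finprod_mem_iUnion hdisjPP (fun a => Set.toFinite (PP a)),
        finprod_eq_prod_of_fintype]
      rfl
    have hPPval : ∀ a, G.signOf (PP a) =
        if H.deg C a = 2 then sw (att (ff a).1 a) * sw (att (ff a).2 a) else 1 := by
      intro a
      by_cases hd : H.deg C a = 2
      · rw [if_pos hd]; exact (hQ a hd).2.2.2.2.2.2.2.2
      · rw [if_neg hd, hP0 a hd]; exact signOf_empty
    have hsgnψ : ∀ h, G.sgn (ψ h) = sw (att h (pf h).1) * sw (att h (pf h).2) * H.sgn h := by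
      intro h
      rw [hatt1, hatt2]
      exact units_swap _ _ _ _ (hsgn1 h)
    have hIm : G.signOf (ψ '' C) =
        (∏ᶠ h ∈ C, sw (att h (pf h).1) * sw (att h (pf h).2)) * H.signOf C := by
      rw [signOf, finprod_mem_image hinj.injOn]
      have hcongr : ∏ᶠ h ∈ C, G.sgn (ψ h)
          = ∏ᶠ h ∈ C, (sw (att h (pf h).1) * sw (att h (pf h).2)) * H.sgn h :=
        finprod_mem_congr rfl (fun h _ => hsgnψ h)
      rw [hcongr, finprod_mem_mul_distrib (Set.toFinite C)]
      rfl
    have hIfC : ∀ (F : H.E → ℤˣ), (∏ᶠ h ∈ C, F h) = ∏ h : H.E, if h ∈ C then F h else 1 := by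
      intro F
      rw [finprod_mem_def, finprod_eq_prod_of_fintype]
      exact Finset.prod_congr rfl (fun h _ => Set.mulIndicator_apply _ _ _)
    set g2 : H.E → H.V → ℤˣ :=
      fun h a => if h ∈ C ∧ a ∈ H.ends h then sw (att h a) else 1 with hg2
    have hX1 : ∀ h : H.E,
        (if h ∈ C then sw (att h (pf h).1) * sw (att h (pf h).2) else 1)
          = ∏ a : H.V, g2 h a := by
      intro h
      by_cases hh : h ∈ C
      · rw [if_pos hh]
        rw [← Finset.prod_subset (Finset.subset_univ {(pf h).1, (pf h).2}) ?_]
        · rw [Finset.prod_pair (hploop h), hg2]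
          simp only
          rw [if_pos ⟨hh, by rw [hends1 h]; exact Sym2.mem_mk_left _ _⟩,
            if_pos ⟨hh, by rw [hends1 h]; exact Sym2.mem_mk_right _ _⟩]
        · intro a _ ha
          simp only [Finset.mem_insert, Finset.mem_singleton] at ha
          push_neg at ha
          rw [hg2]
          simp only
          rw [if_neg]
          rintro ⟨-, hae⟩
          rw [hends1 h, Sym2.mem_iff] at hae
          tauto
      · rw [if_neg hh]
        symm
        apply Finset.prod_eq_one
        intro a _
        exact if_neg (fun hc => hh hc.1)
    have hX2 : ∀ a : H.V,
        (if H.deg C a = 2 then sw (att (ff a).1 a) * sw (att (ff a).2 a) else 1)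
          = ∏ h : H.E, g2 h a := by
      intro a
      by_cases hd : H.deg C a = 2
      · obtain ⟨hf1C, hf2C, hf12, haf1, haf2, huniq, -, -, -⟩ := hQ a hd
        rw [if_pos hd]
        rw [← Finset.prod_subset (Finset.subset_univ {(ff a).1, (ff a).2}) ?_]
        · rw [Finset.prod_pair hf12, hg2]
          simp only
          rw [if_pos ⟨hf1C, haf1⟩, if_pos ⟨hf2C, haf2⟩]
        · intro h _ hh
          simp only [Finset.mem_insert, Finset.mem_singleton] at hh
          push_neg at hh
          rw [hg2]
          simp only
          rw [if_neg]
          rintro ⟨hc, hae⟩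
          rcases huniq h hc hae with rfl | rfl
          · exact hh.1 rfl
          · exact hh.2 rfl
      · rw [if_neg hd]
        have hd0 : H.deg C a = 0 := (hCdeg a).resolve_right hd
        have hempty : {h ∈ C | a ∈ H.ends h} = ∅ :=
          (Set.ncard_eq_zero (Set.toFinite {h ∈ C | a ∈ H.ends h})).mp hd0
        symm
        apply Finset.prod_eq_one
        intro h _
        apply if_neg
        rintro ⟨hc, hae⟩
        have hmm : h ∈ {h ∈ C | a ∈ H.ends h} := ⟨hc, hae⟩
        rw [hempty] at hmm
        exact hmm
    rw [hsplit, hIm, hU,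
      hIfC (fun h => sw (att h (pf h).1) * sw (att h (pf h).2))]
    have e1 : (∏ h : H.E, if h ∈ C then sw (att h (pf h).1) * sw (att h (pf h).2) else 1)
        = ∏ h : H.E, ∏ a : H.V, g2 h a :=
      Finset.prod_congr rfl (fun h _ => hX1 h)
    have e2 : (∏ a : H.V, G.signOf (PP a)) = ∏ h : H.E, ∏ a : H.V, g2 h a := by
      refine (Finset.prod_congr rfl (fun a _ => ?_)).trans Finset.prod_comm
      rw [hPPval a, hX2 a]
    rw [e1, e2, mul_right_comm, Int.units_mul_self, one_mul]

end SGraph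


/-- If `H` is a minor of the signed graph `G` and `e₁, e₂` are untied in `H`,
then the corresponding edges are untied in `G`. -/
theorem stmt_7 (H G : SGraph) (ψ : H.E → G.E) (hm : SGraph.IsSignedMinor H G ψ)
    (e₁ e₂ : H.E) (h : H.Untied e₁ e₂) :
    G.Untied (ψ e₁) (ψ e₂) := by
  obtain ⟨⟨C, hC, h1, h2, hs⟩, ⟨C2, hC2, h12, h22, hs2⟩⟩ := h
  obtain ⟨S, hS, hmem, hsg⟩ := SGraph.cycle_lift H G ψ hm C hC
  obtain ⟨S2, hS2, hmem2, hsg2⟩ := SGraph.cycle_lift H G ψ hm C2 hC2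
  exact ⟨⟨S, hS, hmem _ h1, hmem _ h2, by rw [hsg, hs]⟩,
    ⟨S2, hS2, hmem2 _ h12, hmem2 _ h22, by rw [hsg2, hs2]⟩⟩
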